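/- Assume n = 1, so ℂ⟨x⟩ = ℂ⟨x_1⟩ is generated by the single tuple of generators x_{11}, …, x_{1r(1)}, and let τ be a Hermitian unital linear functional on ℂ⟨x⟩. If τ has finite-dimensional approximants, then π_{orb,R}(h : τ) = −τ(h) for every self-adjoint h ∈ ℂ⟨x⟩, and consequently η_{orb,R}(τ) = 0. If τ does not have finite-dimensional approximants, then η_{orb,R}(τ) = −∞. -/

import Mathlib

/-!
Orbital free pressure and its Legendre transform (Hiai–Ueda).

Common infrastructure: the free unital complex *-algebra on self-adjoint generators,
matrix microstate sets, the orbital free pressure, the orbital η-entropy, the orbital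
free entropy; Lebesgue measure on self-adjoint matrices, the free pressure, free
entropy and η-entropy; Gibbs (micro-)ensembles.

The Haar probability measures `γ_{U(N)}` on the unitary groups are formalized as a
family of left-invariant Borel probability measures (which uniquely determines them).
-/

open MeasureTheory Filter Topology
open scoped BigOperators ENNReal TensorProduct ComplexOrder

noncomputable section

namespace OrbFP

/-- The algebra of `N × N` complex matrices. -/
abbrev Mat (N : ℕ) := Matrix (Fin N) (Fin N) ℂ

/-- The normalized trace `tr_N`. -/
def trN (N : ℕ) (A : Mat N) : ℂ := A.trace / (N : ℂ)

/-- The (ℓ²-)operator norm of a matrix. -/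
def opNorm {N : ℕ} (A : Mat N) : ℝ := ‖Matrix.toEuclideanCLM (𝕜 := ℂ) A‖

/-- The unitary group `U(N)`. -/
abbrev UN (N : ℕ) := Matrix.unitaryGroup (Fin N) ℂ

instance (N : ℕ) : MeasurableSpace (UN N) := borel _
instance (N : ℕ) : BorelSpace (UN N) := ⟨rfl⟩
instance (N : ℕ) : MeasurableSpace (Mat N) := borel _
instance (N : ℕ) : BorelSpace (Mat N) := ⟨rfl⟩

/-- The free unital complex *-algebra on self-adjoint generators indexed by `X`. -/
abbrev FAlg (X : Type) := FreeAlgebra ℂ X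

/-- Coefficient-wise complex conjugation on the free algebra. -/
def conjCoeff {X : Type} (p : FAlg X) : FAlg X :=
  (FreeAlgebra.equivMonoidAlgebraFreeMonoid (R := ℂ) (X := X)).symm
    (MonoidAlgebra.ofCoeff (Finsupp.mapRange (starRingEnd ℂ) (map_zero _)
      (FreeAlgebra.equivMonoidAlgebraFreeMonoid (R := ℂ) (X := X) p).coeff))

/-- The star operation of the free complex *-algebra with self-adjoint generators:
reverse words (the `star` of `FreeAlgebra`) and conjugate the coefficients. -/
def fstar {X : Type} (p : FAlg X) : FAlg X := star (conjCoeff p)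

/-- Self-adjointness in the free complex *-algebra. -/
def IsSA {X : Type} (p : FAlg X) : Prop := fstar p = p

/-- A Hermitian unital linear functional. -/
def IsHermState {X : Type} (τ : FAlg X →ₗ[ℂ] ℂ) : Prop :=
  τ 1 = 1 ∧ ∀ p, τ (fstar p) = starRingEnd ℂ (τ p)

/-- Ordered product of a word of matrices. -/
def wordMat {N : ℕ} {κ : Type} (A : κ → Mat N) (w : List κ) : Mat N := (w.map A).prod

/-- Ordered product of a word of generators in the free algebra. -/
def wordAlg {κ : Type} (w : List κ) : FAlg κ := (w.map (FreeAlgebra.ι ℂ)).prod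

/-- The microstate set `Γ_R(τ; N, m, δ)` of a functional on the free algebra on `κ`:
tuples of self-adjoint matrices of operator norm at most `R` whose normalized trace of
every word of length `1 ≤ l ≤ m` is `δ`-close to the corresponding moment of `τ`. -/
def microSet {κ : Type} (R : ℝ) (τ : FAlg κ →ₗ[ℂ] ℂ) (N m : ℕ) (δ : ℝ) :
    Set (κ → Mat N) :=
  {A | (∀ j, (A j).IsHermitian ∧ opNorm (A j) ≤ R) ∧
    ∀ w : List κ, w ≠ [] → w.length ≤ m →
      ‖trN N (wordMat A w) - τ (wordAlg w)‖ < δ}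

/-- `τ` has finite-dimensional approximants. -/
def HasFDA {κ : Type} (R : ℝ) (τ : FAlg κ →ₗ[ℂ] ℂ) : Prop :=
  ∀ (m : ℕ) (δ : ℝ), 0 < δ → ∃ N, (microSet R τ N m δ).Nonempty

variable {ι : Type} [Fintype ι]

/-- The index of the generators `x_{ij}`, `i ∈ ι`, `1 ≤ j ≤ r i`. -/
abbrev gen (r : ι → ℕ) := Σ i : ι, Fin (r i)

/-- Evaluation of the full free algebra at a family of matrix tuples. -/
def evalA {r : ι → ℕ} {N : ℕ} (A : ∀ i, Fin (r i) → Mat N) :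
    FAlg (gen r) →ₐ[ℂ] Mat N :=
  FreeAlgebra.lift ℂ fun p : gen r => A p.1 p.2

/-- The canonical embedding `ℂ⟨x_i⟩ → ℂ⟨x⟩`. -/
def inclAlg (r : ι → ℕ) (i : ι) : FAlg (Fin (r i)) →ₐ[ℂ] FAlg (gen r) :=
  FreeAlgebra.lift ℂ fun j => FreeAlgebra.ι ℂ (⟨i, j⟩ : gen r)

/-- The restriction of a functional on `ℂ⟨x⟩` to `ℂ⟨x_i⟩`. -/
def restr {r : ι → ℕ} (τ : FAlg (gen r) →ₗ[ℂ] ℂ) (i : ι) :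
    FAlg (Fin (r i)) →ₗ[ℂ] ℂ :=
  τ ∘ₗ (inclAlg r i).toLinearMap

/-- The embedding of the free algebra of a sub-system of the variables. -/
def inclSub {r : ι → ℕ} (P : ι → Prop) :
    FAlg (gen fun i : Subtype P => r i.1) →ₐ[ℂ] FAlg (gen r) :=
  FreeAlgebra.lift ℂ fun p => FreeAlgebra.ι ℂ (⟨p.1.1, p.2⟩ : gen r)

/-- Restriction of a functional to a sub-system of the variables. -/
def restrSub {r : ι → ℕ} (P : ι → Prop) (τ : FAlg (gen r) →ₗ[ℂ] ℂ) :
    FAlg (gen fun i : Subtype P => r i.1) →ₗ[ℂ] ℂ :=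
  τ ∘ₗ (inclSub P).toLinearMap

/-- The conjugated family `(V_i A_i V_i^*)_i`. -/
def conjFam {r : ι → ℕ} {N : ℕ} (V : ι → UN N) (A : ∀ i, Fin (r i) → Mat N) :
    ∀ i, Fin (r i) → Mat N :=
  fun i j => (V i : Mat N) * A i j * star (V i : Mat N)

/-- The Gibbs weight `exp(-N² tr_N(h((V_i A_i V_i^*)_i)))`. -/
def gibbsWt {r : ι → ℕ} {N : ℕ} (h : FAlg (gen r)) (A : ∀ i, Fin (r i) → Mat N)
    (V : ι → UN N) : ℝ :=
  Real.exp (-(N : ℝ) ^ 2 * (trN N (evalA (conjFam V A) h)).re)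

/-- The product `∏_i Γ_R(τ_i; N, m, δ)` of the microstate sets. -/
def microProd (R : ℝ) {r : ι → ℕ} (τs : ∀ i, FAlg (Fin (r i)) →ₗ[ℂ] ℂ)
    (N m : ℕ) (δ : ℝ) : Set (∀ i, Fin (r i) → Mat N) :=
  {A | ∀ i, A i ∈ microSet R (τs i) N m δ}

/-- The finite-`N` orbital free pressure `π_{orb,R}(h : (τ_i); N, m, δ)`
(`-∞` when some microstate set is empty). -/
def piOrbN (γ : ∀ N, Measure (UN N)) (R : ℝ) {r : ι → ℕ} (h : FAlg (gen r))
    (τs : ∀ i, FAlg (Fin (r i)) →ₗ[ℂ] ℂ) (N m : ℕ) (δ : ℝ) : EReal :=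
  ⨆ A ∈ microProd R τs N m δ,
    ((Real.log (∫ V : ι → UN N, gibbsWt h A V ∂(Measure.pi fun _ => γ N)) : ℝ) : EReal)

/-- The orbital free pressure `π_{orb,R}(h : (τ_i))`. -/
def piOrb (γ : ∀ N, Measure (UN N)) (R : ℝ) {r : ι → ℕ} (h : FAlg (gen r))
    (τs : ∀ i, FAlg (Fin (r i)) →ₗ[ℂ] ℂ) : EReal :=
  ⨅ (m : ℕ) (δ : ℝ) (_ : 0 < δ),
    Filter.limsup
      (fun N : ℕ => ((((N : ℝ) ^ 2)⁻¹ : ℝ) : EReal) * piOrbN γ R h τs N m δ)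
      Filter.atTop

/-- The "universal" `R`-norm `‖h‖_R`: the supremum of the operator norms of all
evaluations of `h` at families of self-adjoint matrices of norm at most `R`. -/
def normR (R : ℝ) {r : ι → ℕ} (h : FAlg (gen r)) : ℝ :=
  sSup {t : ℝ | ∃ (N : ℕ) (A : ∀ i, Fin (r i) → Mat N),
    (∀ i j, (A i j).IsHermitian ∧ opNorm (A i j) ≤ R) ∧ t = opNorm (evalA A h)}

/-- The minus Legendre transform `inf_h (φ(h) + π_{orb,R}(h : (τ_i)))` of the orbital
free pressure, relative to `(τ_i)`. -/
def etaOrbRel (γ : ∀ N, Measure (UN N)) (R : ℝ) {r : ι → ℕ}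
    (τ : FAlg (gen r) →ₗ[ℂ] ℂ) (τs : ∀ i, FAlg (Fin (r i)) →ₗ[ℂ] ℂ) : EReal :=
  ⨅ (h : FAlg (gen r)) (_ : IsSA h),
    (((τ h).re : ℝ) : EReal) + piOrb γ R h τs

/-- The orbital `η`-entropy `η_{orb,R}(τ)`. -/
def etaOrb (γ : ∀ N, Measure (UN N)) (R : ℝ) {r : ι → ℕ}
    (τ : FAlg (gen r) →ₗ[ℂ] ℂ) : EReal :=
  etaOrbRel γ R τ (restr τ)

/-- The microstate set `Γ_R(τ; N, m, δ)` of a functional on the full free algebra. -/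
def microFull (R : ℝ) {r : ι → ℕ} (τ : FAlg (gen r) →ₗ[ℂ] ℂ) (N m : ℕ) (δ : ℝ) :
    Set (∀ i, Fin (r i) → Mat N) :=
  {A | (∀ i j, (A i j).IsHermitian ∧ opNorm (A i j) ≤ R) ∧
    ∀ w : List (gen r), w ≠ [] → w.length ≤ m →
      ‖trN N (wordMat (fun p : gen r => A p.1 p.2) w) - τ (wordAlg w)‖ < δ}

/-- `τ` (on the full algebra) has finite-dimensional approximants. -/
def HasFDAFull (R : ℝ) {r : ι → ℕ} (τ : FAlg (gen r) →ₗ[ℂ] ℂ) : Prop :=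
  ∀ (m : ℕ) (δ : ℝ), 0 < δ → ∃ N, (microFull R τ N m δ).Nonempty

/-- The orbital microstate set `Γ_orb(τ : (A_i); N, m, δ)`. -/
def orbSet (R : ℝ) {r : ι → ℕ} (τ : FAlg (gen r) →ₗ[ℂ] ℂ) {N : ℕ}
    (A : ∀ i, Fin (r i) → Mat N) (m : ℕ) (δ : ℝ) : Set (ι → UN N) :=
  {V | conjFam V A ∈ microFull R τ N m δ}

/-- The orbital free entropy `χ_{orb,R}(τ)`. -/
def chiOrb (γ : ∀ N, Measure (UN N)) (R : ℝ) {r : ι → ℕ}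
    (τ : FAlg (gen r) →ₗ[ℂ] ℂ) : EReal :=
  ⨅ (m : ℕ) (δ : ℝ) (_ : 0 < δ),
    Filter.limsup
      (fun N : ℕ => ((((N : ℝ) ^ 2)⁻¹ : ℝ) : EReal) *
        ⨆ A ∈ microProd R (restr τ) N m δ,
          ENNReal.log ((Measure.pi fun _ : ι => γ N) (orbSet R τ A m δ)))
      Filter.atTop

/-- A tracial `R₀`-state on `ℂ⟨x⟩`. -/
def IsTracialRState {r : ι → ℕ} (R₀ : ℝ) (τ : FAlg (gen r) →ₗ[ℂ] ℂ) : Prop :=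
  IsHermState τ ∧ (∀ p q, τ (p * q) = τ (q * p)) ∧
  (∀ p, 0 ≤ (τ (fstar p * p)).re) ∧
  ∀ (i : ι) (j : Fin (r i)) (k : ℕ) (p : FAlg (gen r)),
    (τ (fstar p * FreeAlgebra.ι ℂ (⟨i, j⟩ : gen r) ^ (2 * k) * p)).re
      ≤ R₀ ^ (2 * k) * (τ (fstar p * p)).re

/-- `τ` is the free product of its restrictions `τ_i`: alternating words in the
`τ`-centered subalgebras `ℂ⟨x_i⟩` have vanishing `τ`-value. -/
def IsFreeProduct {r : ι → ℕ} (τ : FAlg (gen r) →ₗ[ℂ] ℂ) : Prop :=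
  ∀ (k : ℕ), 0 < k → ∀ (idx : Fin k → ι) (p : ∀ l, FAlg (Fin (r (idx l)))),
    (∀ l, τ (inclAlg r (idx l) (p l)) = 0) →
    (∀ (l : Fin k) (hl : (l : ℕ) + 1 < k), idx l ≠ idx ⟨(l : ℕ) + 1, hl⟩) →
    τ ((List.ofFn fun l => inclAlg r (idx l) (p l)).prod) = 0

/-- The partition function `Z_N^{(h, Ξ(N))}` of the orbital Gibbs micro-ensemble. -/
def ZOrbN (γ : ∀ N, Measure (UN N)) {r : ι → ℕ} (h : FAlg (gen r)) {N : ℕ}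
    (A : ∀ i, Fin (r i) → Mat N) : ℝ :=
  ∫ V : ι → UN N, gibbsWt h A V ∂(Measure.pi fun _ => γ N)

/-- The orbital Gibbs micro-ensemble `μ_N^{(h, Ξ(N))}`. -/
def muOrbN (γ : ∀ N, Measure (UN N)) {r : ι → ℕ} (h : FAlg (gen r)) {N : ℕ}
    (A : ∀ i, Fin (r i) → Mat N) : Measure (ι → UN N) :=
  (Measure.pi fun _ => γ N).withDensity
    fun V => ENNReal.ofReal (gibbsWt h A V / ZOrbN γ h A)

/-! ### Lebesgue measure on self-adjoint matrices and one-variable quantities -/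

/-- The parametrization of self-adjoint matrices by the diagonal entries and the real
and imaginary parts of the above-diagonal entries. -/
def matOfCoord (N : ℕ) (f : Fin N × Fin N → ℝ) : Mat N :=
  Matrix.of fun p q =>
    if p = q then (f (p, p) : ℂ)
    else if p < q then (f (p, q) : ℂ) + (f (q, p) : ℂ) * Complex.I
    else (f (q, p) : ℂ) - (f (p, q) : ℂ) * Complex.I

/-- The Lebesgue measure `Λ_N` on self-adjoint `N × N` matrices. -/
def LambdaMat (N : ℕ) : Measure (Mat N) :=
  Measure.map (matOfCoord N) (volume : Measure (Fin N × Fin N → ℝ))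

/-- The product Lebesgue measure `Λ_N^{⊗n}` on `n`-tuples of self-adjoint matrices. -/
def LambdaPow (n N : ℕ) : Measure (Fin n → Mat N) :=
  Measure.map (fun f i => matOfCoord N (f i))
    (volume : Measure (Fin n → Fin N × Fin N → ℝ))

/-- Evaluation of a polynomial in `n` single variables at an `n`-tuple of matrices. -/
def evalSingle {n : ℕ} {N : ℕ} (A : Fin n → Mat N) :
    FAlg (gen fun _ : Fin n => 1) →ₐ[ℂ] Mat N :=
  evalA fun i (_ : Fin 1) => A i

/-- The set `((M_N(ℂ)^{sa})_R)^n`. -/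
def ballR (n N : ℕ) (R : ℝ) : Set (Fin n → Mat N) :=
  {A | ∀ i, (A i).IsHermitian ∧ opNorm (A i) ≤ R}

/-- The partition function `Z_{R,N}^h`. -/
def ZR (n N : ℕ) (R : ℝ) (h : FAlg (gen fun _ : Fin n => 1)) : ℝ :=
  ∫ A in ballR n N R,
    Real.exp (-(N : ℝ) ^ 2 * (trN N (evalSingle A h)).re) ∂(LambdaPow n N)

/-- The free pressure `π_R(h)`. -/
def piR (n : ℕ) (R : ℝ) (h : FAlg (gen fun _ : Fin n => 1)) : EReal :=
  Filter.limsup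
    (fun N : ℕ => ((((N : ℝ) ^ 2)⁻¹ : ℝ) : EReal) * ((Real.log (ZR n N R h) : ℝ) : EReal)
      + ((((n : ℝ) / 2 * Real.log N) : ℝ) : EReal))
    Filter.atTop

/-- The Gibbs micro-ensemble `λ_{R,N}^h`. -/
def lambdaGibbs (n N : ℕ) (R : ℝ) (h : FAlg (gen fun _ : Fin n => 1)) :
    Measure (Fin n → Mat N) :=
  ((LambdaPow n N).restrict (ballR n N R)).withDensity
    fun A => ENNReal.ofReal
      (Real.exp (-(N : ℝ) ^ 2 * (trN N (evalSingle A h)).re) / ZR n N R h)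

/-- The microstate free entropy `χ_R` of a single-variable functional. -/
def chiR1 (R : ℝ) (τ : FAlg (Fin 1) →ₗ[ℂ] ℂ) : EReal :=
  ⨅ (m : ℕ) (δ : ℝ) (_ : 0 < δ),
    Filter.limsup
      (fun N : ℕ => ((((N : ℝ) ^ 2)⁻¹ : ℝ) : EReal) *
          ENNReal.log (LambdaMat N {B : Mat N | (fun _ : Fin 1 => B) ∈ microSet R τ N m δ})
        + ((((1 : ℝ) / 2 * Real.log N) : ℝ) : EReal))
      Filter.atTop

/-- The microstate free entropy `χ_R` of a functional on `n` single variables. -/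
def chiRn (n : ℕ) (R : ℝ) (σ : FAlg (gen fun _ : Fin n => 1) →ₗ[ℂ] ℂ) : EReal :=
  ⨅ (m : ℕ) (δ : ℝ) (_ : 0 < δ),
    Filter.limsup
      (fun N : ℕ => ((((N : ℝ) ^ 2)⁻¹ : ℝ) : EReal) *
          ENNReal.log (LambdaPow n N
            {A : Fin n → Mat N | (fun i (_ : Fin 1) => A i) ∈ microFull R σ N m δ})
        + ((((n : ℝ) / 2 * Real.log N) : ℝ) : EReal))
      Filter.atTop

/-- The `η`-entropy `η_R(τ)`, the minus Legendre transform of the free pressure. -/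
def etaR (n : ℕ) (R : ℝ) (τ : FAlg (gen fun _ : Fin n => 1) →ₗ[ℂ] ℂ) : EReal :=
  ⨅ (h : FAlg (gen fun _ : Fin n => 1)) (_ : IsSA h),
    (((τ h).re : ℝ) : EReal) + piR n R h

/-! ### The doubled (tensor) orbital free pressure -/

/-- The algebraic tensor product `ℂ⟨x⟩ ⊗ ℂ⟨x⟩`. -/
abbrev TAlg (r : ι → ℕ) := TensorProduct ℂ (FAlg (gen r)) (FAlg (gen r))

/-- The functional `τ ⊗ τ` on `ℂ⟨x⟩ ⊗ ℂ⟨x⟩`. -/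
def tensFun {r : ι → ℕ} (τ : FAlg (gen r) →ₗ[ℂ] ℂ) : TAlg r →ₗ[ℂ] ℂ :=
  (TensorProduct.lid ℂ ℂ).toLinearMap ∘ₗ TensorProduct.map τ τ

/-- The normalized trace as a linear map. -/
def trLin (N : ℕ) : Mat N →ₗ[ℂ] ℂ := (N : ℂ)⁻¹ • Matrix.traceLinearMap (Fin N) ℂ ℂ

/-- The functional `tr_N ⊗ tr_N` on `M_N(ℂ) ⊗ M_N(ℂ)`. -/
def tr2 (N : ℕ) : TensorProduct ℂ (Mat N) (Mat N) →ₗ[ℂ] ℂ :=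
  (TensorProduct.lid ℂ ℂ).toLinearMap ∘ₗ TensorProduct.map (trLin N) (trLin N)

/-- Evaluation of `ℂ⟨x⟩ ⊗ ℂ⟨x⟩` at a family of matrix tuples. -/
def evalT {r : ι → ℕ} {N : ℕ} (A : ∀ i, Fin (r i) → Mat N) :
    TAlg r →ₐ[ℂ] TensorProduct ℂ (Mat N) (Mat N) :=
  Algebra.TensorProduct.map (evalA A) (evalA A)

/-- The finite-`N` doubled orbital free pressure `π^{(2)}_{orb,R}(p : (τ_i); N, m, δ)`. -/
def pi2OrbN (γ : ∀ N, Measure (UN N)) (R : ℝ) {r : ι → ℕ} (p : TAlg r)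
    (τs : ∀ i, FAlg (Fin (r i)) →ₗ[ℂ] ℂ) (N m : ℕ) (δ : ℝ) : EReal :=
  ⨆ A ∈ microProd R τs N m δ,
    ((Real.log (∫ V : ι → UN N,
        Real.exp (-(N : ℝ) ^ 2 * (tr2 N (evalT (conjFam V A) p)).re)
        ∂(Measure.pi fun _ => γ N)) : ℝ) : EReal)

/-- The doubled orbital free pressure `π^{(2)}_{orb,R}(p : (τ_i))`. -/
def pi2Orb (γ : ∀ N, Measure (UN N)) (R : ℝ) {r : ι → ℕ} (p : TAlg r)
    (τs : ∀ i, FAlg (Fin (r i)) →ₗ[ℂ] ℂ) : EReal :=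
  ⨅ (m : ℕ) (δ : ℝ) (_ : 0 < δ),
    Filter.limsup
      (fun N : ℕ => ((((N : ℝ) ^ 2)⁻¹ : ℝ) : EReal) * pi2OrbN γ R p τs N m δ)
      Filter.atTop


/-! ### Auxiliary lemmas for Statement 11 -/

section Aux

set_option linter.unusedSectionVars false
set_option synthInstance.maxHeartbeats 1000000
set_option maxHeartbeats 1000000

lemma evalA_wordAlg {r : ι → ℕ} {N : ℕ} (A : ∀ i, Fin (r i) → Mat N) (w : List (gen r)) :
    evalA A (wordAlg w) = wordMat (fun p : gen r => A p.1 p.2) w := by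
  unfold wordAlg wordMat
  rw [map_list_prod, List.map_map]
  congr 1
  simp [Function.comp, evalA]

lemma isSA_zero {X : Type} : IsSA (0 : FAlg X) := by
  simp [IsSA, fstar, conjCoeff]

lemma trN_conj {N : ℕ} (U B : Mat N) (hU : star U * U = 1) :
    trN N (U * B * star U) = trN N B := by
  unfold trN
  rw [Matrix.trace_mul_cycle, hU, one_mul]

/-- Conjugation invariance of evaluation, `ι` a subsingleton. -/
lemma evalA_conjFam [Subsingleton ι] {r : ι → ℕ} {N : ℕ} (i₀ : ι) (V : ι → UN N)
    (A : ∀ i, Fin (r i) → Mat N) (h : FAlg (gen r)) :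
    evalA (conjFam V A) h = (V i₀ : Mat N) * evalA A h * star (V i₀ : Mat N) := by
  have hU : star (V i₀ : Mat N) * (V i₀ : Mat N) = 1 := (Unitary.mem_iff.mp (V i₀).2).1
  have hU' : (V i₀ : Mat N) * star (V i₀ : Mat N) = 1 := (Unitary.mem_iff.mp (V i₀).2).2
  induction h using FreeAlgebra.induction with
  | grade0 c =>
    rw [AlgHom.commutes, AlgHom.commutes, Algebra.algebraMap_eq_smul_one, mul_smul_comm,
      mul_one, smul_mul_assoc, hU']
  | grade1 p =>
    simp only [evalA, FreeAlgebra.lift_ι_apply]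
    have : V p.1 = V i₀ := congrArg V (Subsingleton.elim _ _)
    simp [conjFam, this]
  | mul a b ha hb =>
    rw [map_mul, map_mul, ha, hb]
    calc (V i₀ : Mat N) * evalA A a * star (V i₀ : Mat N) *
          ((V i₀ : Mat N) * evalA A b * star (V i₀ : Mat N))
        = (V i₀ : Mat N) * evalA A a * (star (V i₀ : Mat N) * (V i₀ : Mat N)) *
          (evalA A b * star (V i₀ : Mat N)) := by noncomm_ring
      _ = _ := by rw [hU, mul_one]; noncomm_ring
  | add a b ha hb => rw [map_add, map_add, ha, hb]; noncomm_ring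

lemma trN_evalA_conjFam [Subsingleton ι] [Nonempty ι] {r : ι → ℕ} {N : ℕ} (V : ι → UN N)
    (A : ∀ i, Fin (r i) → Mat N) (h : FAlg (gen r)) :
    trN N (evalA (conjFam V A) h) = trN N (evalA A h) := by
  obtain ⟨i₀⟩ := ‹Nonempty ι›
  rw [evalA_conjFam i₀, trN_conj _ _ (Unitary.mem_iff.mp (V i₀).2).1]

lemma sigma_eq [Subsingleton ι] {r : ι → ℕ} (i₀ : ι) (p : gen r) :
    (⟨i₀, Fin.cast (congrArg r (Subsingleton.elim p.1 i₀)) p.2⟩ : gen r) = p := by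
  obtain ⟨i, j⟩ := p
  obtain rfl : i = i₀ := Subsingleton.elim _ _
  exact congrArg _ (Fin.ext rfl)

lemma inclAlg_wordAlg {r : ι → ℕ} (i : ι) (w : List (Fin (r i))) :
    inclAlg r i (wordAlg w) = wordAlg (w.map fun j => (⟨i, j⟩ : gen r)) := by
  unfold wordAlg
  rw [map_list_prod, List.map_map, List.map_map]
  congr 1
  simp [Function.comp, inclAlg]

lemma microFull_subset_microProd (R : ℝ) {r : ι → ℕ} (τ : FAlg (gen r) →ₗ[ℂ] ℂ)
    (N m : ℕ) (δ : ℝ) :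
    microFull R τ N m δ ⊆ microProd R (restr τ) N m δ := by
  rintro A ⟨hnorm, hword⟩ i
  refine ⟨fun j => hnorm i j, fun w hw hlen => ?_⟩
  have h1 : wordMat (A i) w = wordMat (fun p : gen r => A p.1 p.2)
      (w.map fun j => (⟨i, j⟩ : gen r)) := by
    unfold wordMat; rw [List.map_map]; rfl
  have h2 : restr τ i (wordAlg w) = τ (wordAlg (w.map fun j => (⟨i, j⟩ : gen r))) := by
    simp only [restr, LinearMap.coe_comp, Function.comp_apply, AlgHom.toLinearMap_apply]
    rw [inclAlg_wordAlg]
  rw [h1, h2]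
  exact hword _ (by simpa using hw) (by simpa using hlen)

lemma microProd_subset_microFull [Subsingleton ι] [Nonempty ι] (R : ℝ) {r : ι → ℕ}
    (τ : FAlg (gen r) →ₗ[ℂ] ℂ) (N m : ℕ) (δ : ℝ) :
    microProd R (restr τ) N m δ ⊆ microFull R τ N m δ := by
  obtain ⟨i₀⟩ := ‹Nonempty ι›
  rintro A hA
  obtain ⟨hnorm, hword⟩ := hA i₀
  refine ⟨fun i j => ?_, fun w hw hlen => ?_⟩
  · obtain rfl : i = i₀ := Subsingleton.elim _ _; exact hnorm j
  · set w' : List (Fin (r i₀)) :=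
      w.map (fun p => Fin.cast (congrArg r (Subsingleton.elim p.1 i₀)) p.2) with hw'
    have hmapback : w'.map (fun j => (⟨i₀, j⟩ : gen r)) = w := by
      rw [hw', List.map_map]
      conv_rhs => rw [← List.map_id w]
      exact List.map_congr_left fun p _ => sigma_eq i₀ p
    have h1 : wordMat (fun p : gen r => A p.1 p.2) w = wordMat (A i₀) w' := by
      unfold wordMat
      rw [hw', List.map_map]
      congr 1
      refine List.map_congr_left fun p _ => ?_
      show A p.1 p.2 = A i₀ (Fin.cast _ p.2)
      exact congrArg (fun q : gen r => A q.1 q.2) (sigma_eq i₀ p).symm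
    have h2 : τ (wordAlg w) = restr τ i₀ (wordAlg w') := by
      simp only [restr, LinearMap.coe_comp, Function.comp_apply, AlgHom.toLinearMap_apply]
      rw [inclAlg_wordAlg, hmapback]
    rw [h1, h2]
    exact hword _ (by simpa [hw'] using hw) (by simpa [hw'] using hlen)

lemma microFull_antitone (R : ℝ) {r : ι → ℕ} (τ : FAlg (gen r) →ₗ[ℂ] ℂ) (N : ℕ)
    {m m' : ℕ} {δ δ' : ℝ} (hm : m ≤ m') (hδ : δ' ≤ δ) :
    microFull R τ N m' δ' ⊆ microFull R τ N m δ := by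
  rintro A ⟨h1, h2⟩
  exact ⟨h1, fun w hw hlen => lt_of_lt_of_le (h2 w hw (hlen.trans hm)) hδ⟩

/-- Amplification `B ↦ B ⊕ ⋯ ⊕ B` (`k` copies), as an algebra homomorphism. -/
def ampAlg (N k : ℕ) : Mat N →ₐ[ℂ] Mat (N * k) :=
  ((Matrix.reindexAlgEquiv ℂ ℂ finProdFinEquiv).toAlgHom.comp
    (AlgHom.mk' (Matrix.blockDiagonalRingHom (Fin N) (Fin k) ℂ)
      (fun c x => Matrix.blockDiagonal_smul c x))).comp
    (Pi.constAlgHom ℂ (Fin k) (Mat N))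

lemma ampAlg_apply (N k : ℕ) (B : Mat N) :
    ampAlg N k B = Matrix.reindex finProdFinEquiv finProdFinEquiv
      (Matrix.blockDiagonal fun _ : Fin k => B) := rfl

lemma ampAlg_star (N k : ℕ) (B : Mat N) : ampAlg N k (star B) = star (ampAlg N k B) := by
  simp only [ampAlg_apply, Matrix.star_eq_conjTranspose, Matrix.reindex_apply,
    Matrix.conjTranspose_submatrix, Matrix.blockDiagonal_conjTranspose]

lemma trace_amp (N k : ℕ) (B : Mat N) :
    (ampAlg N k B).trace = (k : ℂ) * B.trace := by
  rw [ampAlg_apply]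
  have h1 : (Matrix.reindex finProdFinEquiv finProdFinEquiv
      (Matrix.blockDiagonal fun _ : Fin k => B)).trace
      = (Matrix.blockDiagonal fun _ : Fin k => B).trace := by
    simp only [Matrix.trace, Matrix.reindex_apply, Matrix.diag, Matrix.submatrix_apply]
    exact (Fintype.sum_equiv finProdFinEquiv.symm _ _ fun i => rfl)
  rw [h1, Matrix.trace_blockDiagonal, Finset.sum_const, Finset.card_univ, Fintype.card_fin,
    nsmul_eq_mul]

lemma trN_amp {N k : ℕ} (hN : N ≠ 0) (hk : k ≠ 0) (B : Mat N) :
    trN (N * k) (ampAlg N k B) = trN N B := by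
  unfold trN
  rw [trace_amp, Nat.cast_mul]
  have hNc : (N : ℂ) ≠ 0 := Nat.cast_ne_zero.mpr hN
  have hkc : (k : ℂ) ≠ 0 := Nat.cast_ne_zero.mpr hk
  field_simp

set_option synthInstance.maxHeartbeats 1000000 in
set_option maxHeartbeats 1000000 in
lemma opNorm_amp_le (N k : ℕ) (B : Mat N) : opNorm (ampAlg N k B) ≤ opNorm B := by
  classical
  let e1 := Matrix.toEuclideanCLM (n := Fin N) (𝕜 := ℂ)
  let e2 := Matrix.toEuclideanCLM (n := Fin (N * k)) (𝕜 := ℂ)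
  let Ψ : (EuclideanSpace ℂ (Fin N) →L[ℂ] EuclideanSpace ℂ (Fin N)) →⋆ₐ[ℂ]
      (EuclideanSpace ℂ (Fin (N * k)) →L[ℂ] EuclideanSpace ℂ (Fin (N * k))) :=
    (StarAlgHomClass.toStarAlgHom e2).comp
      ((StarAlgHom.mk (ampAlg N k) (fun B => ampAlg_star N k B)).comp
        (StarAlgHomClass.toStarAlgHom e1.symm))
  have key : ∀ T, ‖Ψ T‖ ≤ ‖T‖ := fun T => NonUnitalStarAlgHom.norm_apply_le Ψ T
  have := key (e1 B)
  simpa [Ψ, opNorm, e1, e2] using this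

lemma wordMat_comp_alghom {N M : ℕ} (f : Mat N →ₐ[ℂ] Mat M) {κ : Type} (g : κ → Mat N)
    (w : List κ) : wordMat (fun p => f (g p)) w = f (wordMat g w) := by
  unfold wordMat
  rw [map_list_prod, List.map_map]
  rfl

lemma amp_mem_microFull (R : ℝ) {r : ι → ℕ} (τ : FAlg (gen r) →ₗ[ℂ] ℂ)
    {N m k : ℕ} {δ : ℝ} (hN : N ≠ 0) (hk : k ≠ 0) {A : ∀ i, Fin (r i) → Mat N}
    (hA : A ∈ microFull R τ N m δ) :
    (fun i j => ampAlg N k (A i j)) ∈ microFull R τ (N * k) m δ := by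
  obtain ⟨hnorm, hword⟩ := hA
  refine ⟨fun i j => ?_, fun w hw hlen => ?_⟩
  · constructor
    · have h := (hnorm i j).1
      unfold Matrix.IsHermitian at h ⊢
      rw [← Matrix.star_eq_conjTranspose, ← ampAlg_star, Matrix.star_eq_conjTranspose, h]
    · exact (opNorm_amp_le N k (A i j)).trans (hnorm i j).2
  · have h1 : wordMat (fun p : gen r => ampAlg N k (A p.1 p.2)) w
        = ampAlg N k (wordMat (fun p : gen r => A p.1 p.2) w) :=
      wordMat_comp_alghom (ampAlg N k) _ w
    rw [h1, trN_amp hN hk]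
    exact hword w hw hlen

lemma trN_zero_dim (X : Mat 0) : trN 0 X = 0 := by
  simp [trN, Matrix.trace]

lemma wordMat_zero {N : ℕ} {κ : Type} (w : List κ) (hw : w ≠ []) :
    wordMat (fun _ : κ => (0 : Mat N)) w = 0 := by
  cases w with
  | nil => exact absurd rfl hw
  | cons a t => unfold wordMat; rw [List.map_cons, List.prod_cons, zero_mul]

set_option synthInstance.maxHeartbeats 1000000 in
lemma opNorm_zero {N : ℕ} : opNorm (0 : Mat N) = 0 := by
  simp [opNorm]

lemma zero_mem_microFull (R : ℝ) (hR : 0 ≤ R) {r : ι → ℕ} (τ : FAlg (gen r) →ₗ[ℂ] ℂ)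
    {m : ℕ} {δ : ℝ} (h0 : (microFull R τ 0 m δ).Nonempty) (N : ℕ) :
    (fun _ _ => (0 : Mat N)) ∈ microFull R τ N m δ := by
  obtain ⟨A₀, h₀n, h₀w⟩ := h0
  refine ⟨fun i j => ⟨Matrix.isHermitian_zero, by rw [opNorm_zero]; exact hR⟩,
    fun w hw hlen => ?_⟩
  have h1 := h₀w w hw hlen
  rw [trN_zero_dim] at h1
  rw [show wordMat (fun p : gen r => (0 : Mat N)) w = 0 from wordMat_zero w hw]
  have : trN N (0 : Mat N) = 0 := by simp [trN]
  rw [this]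
  exact h1

/-- With f.d.a., microstates exist at arbitrarily large dimensions. -/
lemma microFull_freq (R : ℝ) (hR : 0 ≤ R) {r : ι → ℕ} (τ : FAlg (gen r) →ₗ[ℂ] ℂ)
    (hFDA : HasFDAFull R τ) (m : ℕ) {δ : ℝ} (hδ : 0 < δ) (M : ℕ) :
    ∃ N, M ≤ N ∧ 1 ≤ N ∧ (microFull R τ N m δ).Nonempty := by
  obtain ⟨N₀, hN₀⟩ := hFDA m δ hδ
  rcases Nat.eq_zero_or_pos N₀ with h | h
  · subst h
    exact ⟨max M 1, le_max_left _ _, le_max_right _ _,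
      ⟨_, zero_mem_microFull R hR τ hN₀ (max M 1)⟩⟩
  · refine ⟨N₀ * (M + 1), ?_, ?_, ?_⟩
    · calc M ≤ M + 1 := Nat.le_succ M
        _ = 1 * (M + 1) := (one_mul _).symm
        _ ≤ N₀ * (M + 1) := Nat.mul_le_mul_right _ h
    · exact Nat.one_le_iff_ne_zero.mpr (Nat.mul_ne_zero h.ne' (Nat.succ_ne_zero M))
    · obtain ⟨A, hA⟩ := hN₀
      exact ⟨_, amp_mem_microFull R τ h.ne' (Nat.succ_ne_zero M) hA⟩

/-- The coefficients of an element of the free algebra. -/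
def coeffs {X : Type} (h : FAlg X) : FreeMonoid X →₀ ℂ :=
  (FreeAlgebra.equivMonoidAlgebraFreeMonoid (R := ℂ) (X := X) h).coeff

/-- A bound on the lengths of words appearing in `h`. -/
def degBound {X : Type} (h : FAlg X) : ℕ :=
  (coeffs h).support.sup fun w => w.toList.length

/-- The sum of absolute values of the coefficients of `h`. -/
def coeffSum {X : Type} (h : FAlg X) : ℝ :=
  ∑ w ∈ (coeffs h).support, ‖(coeffs h) w‖

lemma coeffSum_nonneg {X : Type} (h : FAlg X) : 0 ≤ coeffSum h :=
  Finset.sum_nonneg fun _ _ => norm_nonneg _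

lemma equiv_ι {X : Type} (x : X) :
    FreeAlgebra.equivMonoidAlgebraFreeMonoid (R := ℂ) (X := X) (FreeAlgebra.ι ℂ x)
      = MonoidAlgebra.single (FreeMonoid.of x) 1 := by
  simp [FreeAlgebra.equivMonoidAlgebraFreeMonoid, MonoidAlgebra.of_apply]

lemma symm_single_one {X : Type} (w : FreeMonoid X) :
    (FreeAlgebra.equivMonoidAlgebraFreeMonoid (R := ℂ) (X := X)).symm
      (MonoidAlgebra.single w 1) = wordAlg w.toList := by
  induction w using FreeMonoid.recOn with
  | one =>
    rw [show MonoidAlgebra.single (1 : FreeMonoid X) (1 : ℂ) = 1 from rfl, map_one]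
    rfl
  | of_mul x xs ih =>
    have hsplit : MonoidAlgebra.single (FreeMonoid.of x * xs) (1 : ℂ)
        = MonoidAlgebra.single (FreeMonoid.of x) 1 * MonoidAlgebra.single xs 1 := by
      rw [MonoidAlgebra.single_mul_single, one_mul]
    rw [hsplit, map_mul, ih]
    have hx : (FreeAlgebra.equivMonoidAlgebraFreeMonoid (R := ℂ) (X := X)).symm
        (MonoidAlgebra.single (FreeMonoid.of x) 1) = FreeAlgebra.ι ℂ x := by
      rw [← equiv_ι, AlgEquiv.symm_apply_apply]
    rw [hx]
    show _ = (List.map (FreeAlgebra.ι ℂ) (x :: xs.toList)).prod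
    rw [List.map_cons, List.prod_cons]
    rfl

lemma symm_eq_sum {X : Type} (F : MonoidAlgebra ℂ (FreeMonoid X)) :
    (FreeAlgebra.equivMonoidAlgebraFreeMonoid (R := ℂ) (X := X)).symm F
      = ∑ w ∈ F.coeff.support, F.coeff w • wordAlg w.toList := by
  conv_lhs => rw [← MonoidAlgebra.sum_coeff_single F]
  rw [Finsupp.sum, map_sum]
  refine Finset.sum_congr rfl fun w _ => ?_
  rw [show (MonoidAlgebra.single w (F.coeff w) : MonoidAlgebra ℂ (FreeMonoid X))
        = F.coeff w • MonoidAlgebra.single w (1 : ℂ) by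
      rw [MonoidAlgebra.smul_single', mul_one], _root_.map_smul]
  rw [symm_single_one]

lemma decomp {X : Type} (h : FAlg X) :
    h = ∑ w ∈ (coeffs h).support, coeffs h w • wordAlg w.toList := by
  conv_lhs => rw [show h = (FreeAlgebra.equivMonoidAlgebraFreeMonoid (R := ℂ) (X := X)).symm
    (MonoidAlgebra.ofCoeff (coeffs h)) from (AlgEquiv.symm_apply_apply _ _).symm]
  exact symm_eq_sum (MonoidAlgebra.ofCoeff (coeffs h))


lemma trN_one {N : ℕ} (hN : 1 ≤ N) : trN N (1 : Mat N) = 1 := by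
  rw [trN, Matrix.trace_one]
  simp only [Fintype.card_fin]
  exact div_self (Nat.cast_ne_zero.mpr (Nat.one_le_iff_ne_zero.mp hN))

/-- The key moment estimate: on the microstate set the trace of `h` is within
`coeffSum h * δ` of `τ h`. -/
lemma trN_estimate {r : ι → ℕ} (τ : FAlg (gen r) →ₗ[ℂ] ℂ) (hτ1 : τ 1 = 1) (R : ℝ)
    {δ : ℝ} (hδ : 0 < δ) {N m : ℕ} (hN : 1 ≤ N) (h : FAlg (gen r)) (hm : degBound h ≤ m)
    {A : ∀ i, Fin (r i) → Mat N} (hA : A ∈ microFull R τ N m δ) :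
    ‖trN N (evalA A h) - τ h‖ ≤ coeffSum h * δ := by
  obtain ⟨-, hword⟩ := hA
  have hdecomp := decomp h
  have h1 : trN N (evalA A h) = ∑ w ∈ (coeffs h).support,
      coeffs h w * trN N (evalA A (wordAlg w.toList)) := by
    conv_lhs => rw [hdecomp]
    rw [map_sum]
    simp only [_root_.map_smul]
    simp [trN, Matrix.trace_sum, Finset.sum_div, Matrix.trace_smul, smul_eq_mul,
      mul_div_assoc]
  have h2 : τ h = ∑ w ∈ (coeffs h).support, coeffs h w * τ (wordAlg w.toList) := by
    conv_lhs => rw [hdecomp]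
    rw [map_sum]
    simp only [_root_.map_smul, smul_eq_mul]
  rw [h1, h2, ← Finset.sum_sub_distrib]
  simp only [← mul_sub]
  refine (norm_sum_le _ _).trans ?_
  rw [coeffSum, Finset.sum_mul]
  refine Finset.sum_le_sum fun w hw => ?_
  rw [norm_mul]
  refine mul_le_mul_of_nonneg_left ?_ (norm_nonneg _)
  rcases eq_or_ne w.toList [] with hnil | hnil
  · rw [hnil]
    have : wordAlg ([] : List (gen r)) = 1 := by simp [wordAlg]
    rw [this, map_one, trN_one hN, hτ1, sub_self, norm_zero]
    exact hδ.le
  · have hlen : w.toList.length ≤ m := le_trans (Finset.le_sup hw) hm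
    rw [evalA_wordAlg]
    exact (hword w.toList hnil hlen).le

lemma ereal_le_of_forall_eps {x : EReal} {y : ℝ} (h : ∀ ε : ℝ, 0 < ε → x ≤ ↑(y + ε)) :
    x ≤ ↑y := by
  by_contra hc
  push_neg at hc
  obtain ⟨z, hz1, hz2⟩ := EReal.exists_between_coe_real hc
  have hyz : y < z := EReal.coe_lt_coe_iff.mp hz1
  have := h (z - y) (by linarith)
  rw [show y + (z - y) = z by ring] at this
  exact absurd (this.trans_lt hz2) (lt_irrefl x)

lemma ereal_ge_of_forall_eps {x : EReal} {y : ℝ} (h : ∀ ε : ℝ, 0 < ε → ↑(y - ε) ≤ x) :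
    ↑y ≤ x := by
  by_contra hc
  push_neg at hc
  obtain ⟨z, hz1, hz2⟩ := EReal.exists_between_coe_real hc
  have hyz : z < y := EReal.coe_lt_coe_iff.mp hz2
  have := h (y - z) (by linarith)
  rw [show y - (y - z) = z by ring] at this
  exact absurd (hz1.trans_le this) (lt_irrefl x)


set_option synthInstance.maxHeartbeats 1000000 in
lemma gibbsWt_const [Subsingleton ι] [Nonempty ι] {r : ι → ℕ} {N : ℕ}
    (h : FAlg (gen r)) (A : ∀ i, Fin (r i) → Mat N) (V : ι → UN N) :
    gibbsWt h A V = Real.exp (-(N : ℝ) ^ 2 * (trN N (evalA A h)).re) := by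
  rw [gibbsWt, trN_evalA_conjFam]

set_option synthInstance.maxHeartbeats 1000000 in
lemma ZOrb_eval [Subsingleton ι] [Nonempty ι] (γ : ∀ N, Measure (UN N))
    [∀ N, IsProbabilityMeasure (γ N)] {r : ι → ℕ} (h : FAlg (gen r)) {N : ℕ}
    (A : ∀ i, Fin (r i) → Mat N) :
    ∫ V : ι → UN N, gibbsWt h A V ∂(Measure.pi fun _ => γ N)
      = Real.exp (-(N : ℝ) ^ 2 * (trN N (evalA A h)).re) := by
  simp only [gibbsWt_const]
  simp [integral_const]

set_option synthInstance.maxHeartbeats 1000000 in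
lemma log_ZOrb [Subsingleton ι] [Nonempty ι] (γ : ∀ N, Measure (UN N))
    [∀ N, IsProbabilityMeasure (γ N)] {r : ι → ℕ} (h : FAlg (gen r)) {N : ℕ}
    (A : ∀ i, Fin (r i) → Mat N) :
    Real.log (∫ V : ι → UN N, gibbsWt h A V ∂(Measure.pi fun _ => γ N))
      = -(N : ℝ) ^ 2 * (trN N (evalA A h)).re := by
  rw [ZOrb_eval, Real.log_exp]

variable {r : Fin 1 → ℕ} (R : ℝ) (γ : ∀ N, Measure (UN N)) [∀ N, IsProbabilityMeasure (γ N)]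

lemma mul_div_add_one_le {C ε : ℝ} (hC0 : 0 ≤ C) (hε : 0 < ε) : C * (ε / (C + 1)) ≤ ε := by
  have h1 : C / (C + 1) ≤ 1 := (div_le_one (by linarith)).mpr (by linarith)
  calc C * (ε / (C + 1)) = ε * (C / (C + 1)) := by ring
    _ ≤ ε * 1 := mul_le_mul_of_nonneg_left h1 hε.le
    _ = ε := mul_one ε

lemma piOrb_eq (τ : FAlg (gen r) →ₗ[ℂ] ℂ) (hτ1 : τ 1 = 1) (hR : 0 < R)
    (hFDA : HasFDAFull R τ) (h : FAlg (gen r)) :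
    piOrb γ R h (restr τ) = ((-(τ h).re : ℝ) : EReal) := by
  set t := (τ h).re with ht
  set C := coeffSum h with hC
  have hC0 : 0 ≤ C := coeffSum_nonneg h
  have key : ∀ {N m : ℕ} {δ : ℝ}, 0 < δ → 1 ≤ N → degBound h ≤ m →
      ∀ A ∈ microFull R τ N m δ, |(trN N (evalA A h)).re - t| ≤ C * δ := by
    intro N m δ hδ hN hm A hA
    have hest := trN_estimate τ hτ1 R hδ hN h hm hA
    calc |(trN N (evalA A h)).re - t| = |((trN N (evalA A h)) - τ h).re| := by
          rw [Complex.sub_re]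
      _ ≤ ‖(trN N (evalA A h)) - τ h‖ := Complex.abs_re_le_norm _
      _ ≤ C * δ := hest
  refine le_antisymm ?_ ?_
  · -- upper bound
    refine ereal_le_of_forall_eps fun ε hε => ?_
    set δ := ε / (C + 1) with hδdef
    have hδ : 0 < δ := div_pos hε (by linarith)
    have hCδ : C * δ ≤ ε := mul_div_add_one_le hC0 hε
    refine le_trans (iInf_le_of_le (degBound h) (iInf_le_of_le δ (iInf_le_of_le hδ le_rfl))) ?_
    have hlimsup : Filter.limsup
        (fun N : ℕ => ((((N : ℝ) ^ 2)⁻¹ : ℝ) : EReal) * piOrbN γ R h (restr τ) N (degBound h) δ)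
        Filter.atTop ≤ ((-t + C * δ : ℝ) : EReal) := by
      refine Filter.limsup_le_of_le (by isBoundedDefault) ?_
      filter_upwards [Filter.eventually_ge_atTop 1] with N hN
      have hN2 : ((N : ℝ) ^ 2) ≠ 0 := by
        have : (0:ℝ) < (N:ℝ) := by exact_mod_cast hN
        positivity
      have hsup : piOrbN γ R h (restr τ) N (degBound h) δ
          ≤ (((N : ℝ) ^ 2 * (-t + C * δ) : ℝ) : EReal) := by
        refine iSup₂_le fun A hA => ?_
        have hAfull : A ∈ microFull R τ N (degBound h) δ :=
          microProd_subset_microFull R τ N (degBound h) δ hA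
        have hest := key hδ hN le_rfl A hAfull
        rw [log_ZOrb]
        apply EReal.coe_le_coe_iff.mpr
        have h1 : t - C * δ ≤ (trN N (evalA A h)).re := by linarith [(abs_le.mp hest).1]
        nlinarith [sq_nonneg (N : ℝ)]
      calc ((((N : ℝ) ^ 2)⁻¹ : ℝ) : EReal) * piOrbN γ R h (restr τ) N (degBound h) δ
          ≤ ((((N : ℝ) ^ 2)⁻¹ : ℝ) : EReal) * (((N : ℝ) ^ 2 * (-t + C * δ) : ℝ) : EReal) :=
            mul_le_mul_of_nonneg_left hsup (by
              apply EReal.coe_nonneg.mpr; positivity)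
        _ = ((-t + C * δ : ℝ) : EReal) := by
            rw [← EReal.coe_mul, inv_mul_cancel_left₀ hN2]
    refine hlimsup.trans ?_
    apply EReal.coe_le_coe_iff.mpr
    linarith
  · -- lower bound
    refine le_iInf fun m => le_iInf fun δ => le_iInf fun hδ => ?_
    refine ereal_ge_of_forall_eps fun ε hε => ?_
    set m' := max m (degBound h) with hm'
    set δ' := min δ (ε / (C + 1)) with hδ'def
    have hδ' : 0 < δ' := lt_min hδ (div_pos hε (by linarith))
    have hCδ' : C * δ' ≤ ε := by
      have h1 : δ' ≤ ε / (C + 1) := min_le_right _ _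
      have h2 : C * δ' ≤ C * (ε / (C + 1)) := by
        apply mul_le_mul_of_nonneg_left h1 hC0
      have h3 : C * (ε / (C + 1)) ≤ ε := mul_div_add_one_le hC0 hε
      linarith
    refine Filter.le_limsup_of_frequently_le' ?_
    rw [Filter.frequently_atTop]
    intro M
    obtain ⟨N, hNM, hN1, ⟨A, hA⟩⟩ := microFull_freq R hR.le τ hFDA m' hδ' M
    refine ⟨N, hNM, ?_⟩
    have hN2 : ((N : ℝ) ^ 2) ≠ 0 := by
      have : (0:ℝ) < (N:ℝ) := by exact_mod_cast hN1
      positivity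
    have hAmδ : A ∈ microFull R τ N m δ :=
      microFull_antitone R τ N (le_max_left _ _) (min_le_left _ _) hA
    have hAprod : A ∈ microProd R (restr τ) N m δ :=
      microFull_subset_microProd R τ N m δ hAmδ
    have hval : ((Real.log (∫ V : Fin 1 → UN N, gibbsWt h A V
          ∂(Measure.pi fun _ => γ N)) : ℝ) : EReal) ≤ piOrbN γ R h (restr τ) N m δ :=
      le_iSup₂ (f := fun A (_ : A ∈ microProd R (restr τ) N m δ) =>
        ((Real.log (∫ V : Fin 1 → UN N, gibbsWt h A V
          ∂(Measure.pi fun _ => γ N)) : ℝ) : EReal)) A hAprod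
    have hest := key hδ' hN1 (le_max_right _ _) A hA
    have h2 : (trN N (evalA A h)).re ≤ t + C * δ' := by linarith [(abs_le.mp hest).2]
    calc ((-t - ε : ℝ) : EReal)
        ≤ ((((N : ℝ) ^ 2)⁻¹ * (-(N : ℝ) ^ 2 * (trN N (evalA A h)).re) : ℝ) : EReal) := by
          apply EReal.coe_le_coe_iff.mpr
          have heq : ((N : ℝ) ^ 2)⁻¹ * (-(N : ℝ) ^ 2 * (trN N (evalA A h)).re)
              = -(trN N (evalA A h)).re := by field_simp
          rw [heq]; linarith
      _ = ((((N : ℝ) ^ 2)⁻¹ : ℝ) : EReal) * ((-(N : ℝ) ^ 2 * (trN N (evalA A h)).re : ℝ) : EReal) :=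
          EReal.coe_mul _ _
      _ = ((((N : ℝ) ^ 2)⁻¹ : ℝ) : EReal) * ((Real.log (∫ V : Fin 1 → UN N, gibbsWt h A V
            ∂(Measure.pi fun _ => γ N)) : ℝ) : EReal) := by rw [log_ZOrb]
      _ ≤ ((((N : ℝ) ^ 2)⁻¹ : ℝ) : EReal) * piOrbN γ R h (restr τ) N m δ :=
          mul_le_mul_of_nonneg_left hval (by apply EReal.coe_nonneg.mpr; positivity)

lemma piOrb_bot (τ : FAlg (gen r) →ₗ[ℂ] ℂ) {m₀ : ℕ} {δ₀ : ℝ} (hδ₀ : 0 < δ₀)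
    (hempty : ∀ N, ¬ (microFull R τ N m₀ δ₀).Nonempty) (h : FAlg (gen r)) :
    piOrb γ R h (restr τ) = ⊥ := by
  refine le_bot_iff.mp ?_
  refine le_trans (iInf_le_of_le m₀ (iInf_le_of_le δ₀ (iInf_le_of_le hδ₀ le_rfl))) ?_
  refine Filter.limsup_le_of_le (by isBoundedDefault) ?_
  filter_upwards [Filter.eventually_ge_atTop 1] with N hN
  have hpe : piOrbN γ R h (restr τ) N m₀ δ₀ = ⊥ := by
    refine le_bot_iff.mp (iSup₂_le fun A hA =>
      absurd ⟨A, microProd_subset_microFull R τ N m₀ δ₀ hA⟩ (hempty N))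
  rw [hpe]
  rw [EReal.coe_mul_bot_of_pos]
  have : (0:ℝ) < (N:ℝ) := by exact_mod_cast hN
  positivity

end Aux

/-- Theorem 3.5 (7), `n = 1`: for one multi-variable,
`π_{orb,R}(h : τ) = -τ(h)` and `η_{orb,R}(τ) = 0` when `τ` has finite-dimensional
approximants, and `η_{orb,R}(τ) = -∞` otherwise. -/
theorem statement11 (r : Fin 1 → ℕ) (hr : ∀ i, 1 ≤ r i) (R : ℝ) (hR : 0 < R)
    (γ : ∀ N, Measure (UN N)) [∀ N, IsProbabilityMeasure (γ N)]
    (hγ : ∀ N, (γ N).IsMulLeftInvariant)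
    (τ : FAlg (gen r) →ₗ[ℂ] ℂ) (hτ : IsHermState τ) :
    (HasFDAFull R τ →
      (∀ h : FAlg (gen r), IsSA h →
        piOrb γ R h (restr τ) = (((-(τ h).re : ℝ)) : EReal)) ∧
      etaOrb γ R τ = 0) ∧
    (¬ HasFDAFull R τ → etaOrb γ R τ = ⊥) := by
  constructor
  · intro hFDA
    refine ⟨fun h _ => piOrb_eq R γ τ hτ.1 hR hFDA h, ?_⟩
    have hval : ∀ h : FAlg (gen r), IsSA h →
        (((τ h).re : ℝ) : EReal) + piOrb γ R h (restr τ) = 0 := by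
      intro h _
      rw [piOrb_eq R γ τ hτ.1 hR hFDA h, ← EReal.coe_add]
      norm_num
    refine le_antisymm ?_ ?_
    · refine le_trans (iInf_le_of_le 0 (iInf_le_of_le isSA_zero le_rfl)) ?_
      rw [hval 0 isSA_zero]
    · refine le_iInf fun h => le_iInf fun hSA => ?_
      rw [hval h hSA]
  · intro hn
    rw [HasFDAFull] at hn
    push_neg at hn
    obtain ⟨m₀, δ₀, hδ₀, hempty⟩ := hn
    refine le_bot_iff.mp ?_
    refine le_trans (iInf_le_of_le 0 (iInf_le_of_le isSA_zero le_rfl)) ?_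
    rw [piOrb_bot R γ τ hδ₀ (fun N => by
      simpa [Set.not_nonempty_iff_eq_empty] using hempty N) 0]
    rw [EReal.add_bot]

end OrbFP

end
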